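/- arXiv:2601.16454 — 2 statements merged into one kernel-verified Lean document; each statement's English description precedes it below -/
import Mathlib

section
/- Let t ≥ 1, N_A, N_B ≥ 2, N = N_A·N_B, and let ψ ∈ ℂ^{N_A·N_B} be a unit vector. Let ν be the product of the Haar probability measures on U(N_A) and U(N_B), and let μ be any Borel probability measure on U(N_A) × U(N_B). For a probability measure κ on U(N_A) × U(N_B) define M_κ = ∫ (((U_A ⊗ U_B)ψ)^{⊗t}) (((U_A ⊗ U_B)ψ)^{⊗t})† dκ(U_A, U_B). Then TD(M_ν, ρ_Haar^{(t)}(N)) ≤ TD(M_μ, ρ_Haar^{(t)}(N)). That is, the uniformly-random local-unitary orbit of ψ is the ensemble closest in trace distance to the Haar-random state moments among all ensembles generated from ψ by non-entangling (local) unitaries. -/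
open MeasureTheory Matrix Finset Filter
open scoped Kronecker ENNReal Real ComplexOrder

noncomputable section

attribute [local instance] Matrix.frobeniusNormedAddCommGroup Matrix.frobeniusNormedSpace

instance {m n α : Type*} [MeasurableSpace α] : MeasurableSpace (Matrix m n α) :=
  inferInstanceAs (MeasurableSpace (m → n → α))

/-- `t`-fold tensor power of a vector. -/
def vpow {I : Type*} (v : I → ℂ) (t : ℕ) : (Fin t → I) → ℂ := fun x => ∏ i, v (x i)

/-- The rank-one matrix `v v†`. -/
def outer {I : Type*} (v : I → ℂ) : Matrix I I ℂ :=
  Matrix.of fun a b => v a * (starRingEnd ℂ) (v b)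

/-- `v^{⊗t} (v^{⊗t})†`. -/
def stateMoment {I : Type*} (t : ℕ) (v : I → ℂ) : Matrix (Fin t → I) (Fin t → I) ℂ :=
  outer (vpow v t)

/-- The trace norm `‖X‖₁ = tr √(X† X)`. -/
def traceNorm {I : Type*} [Fintype I] [DecidableEq I] (X : Matrix I I ℂ) : ℝ :=
  (((Matrix.posSemidef_conjTranspose_mul_self X).1.eigenvectorUnitary : Matrix I I ℂ) *
    diagonal (fun i => ((Real.sqrt ((Matrix.posSemidef_conjTranspose_mul_self X).1.eigenvalues i) : ℝ) : ℂ)) *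
    (star (Matrix.posSemidef_conjTranspose_mul_self X).1.eigenvectorUnitary : Matrix I I ℂ)).trace.re

/-- Trace distance. -/
def traceDist {I : Type*} [Fintype I] [DecidableEq I] (ρ σ : Matrix I I ℂ) : ℝ :=
  traceNorm (ρ - σ) / 2

/-- `ρ_Haar^{(t)}`: the `t`-th moment of Haar random states, built from a fiducial unit
vector `φ` and a Haar probability measure `μ` on the unitary group. -/
def haarMoment {I : Type*} [Fintype I] [DecidableEq I] (t : ℕ)
    (μ : Measure (Matrix.unitaryGroup I ℂ)) (φ : I → ℂ) :
    Matrix (Fin t → I) (Fin t → I) ℂ :=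
  ∫ U, stateMoment t ((U : Matrix I I ℂ).mulVec φ) ∂μ

/-- A unit vector. -/
def IsUnitVec {I : Type*} [Fintype I] (v : I → ℂ) : Prop := ∑ x, ‖v x‖ ^ 2 = 1

/-- Reduced density matrix on the first tensor factor. -/
def redA {A B : Type*} [Fintype B] (ψ : A × B → ℂ) : Matrix A A ℂ :=
  Matrix.of fun a a' => ∑ b, ψ (a, b) * (starRingEnd ℂ) (ψ (a', b))

/-- Second Rényi entanglement entropy across the bipartition `A | B`. -/
def renyi2Ent {A B : Type*} [Fintype A] [Fintype B] (ψ : A × B → ℂ) : ℝ :=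
  - Real.log ((redA ψ * redA ψ).trace.re)


/-- The `t`-th moment of the ensemble `{(U_A ⊗ U_B) ψ}` with `(U_A, U_B) ~ κ`. -/
def localMoment {NA NB : ℕ} (t : ℕ)
    (κ : Measure (Matrix.unitaryGroup (Fin NA) ℂ × Matrix.unitaryGroup (Fin NB) ℂ))
    (ψ : Fin NA × Fin NB → ℂ) :
    Matrix (Fin t → Fin NA × Fin NB) (Fin t → Fin NA × Fin NB) ℂ :=
  ∫ U, stateMoment t
      (((U.1 : Matrix (Fin NA) (Fin NA) ℂ) ⊗ₖ (U.2 : Matrix (Fin NB) (Fin NB) ℂ)).mulVec ψ) ∂κ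

instance matCENorm {m n : Type*} [Fintype m] [Fintype n] : ContinuousENorm (Matrix m n ℂ) :=
  SeminormedAddGroup.toContinuousENorm

/-! ### Auxiliary algebraic lemmas -/

set_option linter.unusedSectionVars false

section TPow

variable {I : Type*} [Fintype I] [DecidableEq I]

/-- `t`-fold tensor (Kronecker) power of a matrix. -/
def tpow {I : Type*} (M : Matrix I I ℂ) (t : ℕ) : Matrix (Fin t → I) (Fin t → I) ℂ :=
  Matrix.of fun x y => ∏ i, M (x i) (y i)

lemma tpow_apply {I : Type*} (M : Matrix I I ℂ) (t : ℕ) (x y : Fin t → I) :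
    tpow M t x y = ∏ i, M (x i) (y i) := rfl

lemma tpow_mul (M N : Matrix I I ℂ) (t : ℕ) :
    tpow (M * N) t = tpow M t * tpow N t := by
  ext x y
  simp only [tpow_apply, Matrix.mul_apply, tpow_apply]
  rw [Finset.prod_univ_sum]
  simp [Finset.prod_mul_distrib]

lemma tpow_one (t : ℕ) : tpow (1 : Matrix I I ℂ) t = 1 := by
  ext x y
  by_cases h : x = y
  · subst h; simp [tpow_apply, Matrix.one_apply]
  · obtain ⟨i, hi⟩ := Function.ne_iff.1 h
    rw [tpow_apply, Matrix.one_apply_ne h, Finset.prod_eq_zero (Finset.mem_univ i)]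
    exact Matrix.one_apply_ne hi

lemma tpow_conjTranspose {I : Type*} (M : Matrix I I ℂ) (t : ℕ) :
    tpow Mᴴ t = (tpow M t)ᴴ := by
  ext x y
  simp [tpow_apply, Matrix.conjTranspose_apply, map_prod]

lemma tpow_mem_unitaryGroup {M : Matrix I I ℂ} (hM : M ∈ Matrix.unitaryGroup I ℂ) (t : ℕ) :
    tpow M t ∈ Matrix.unitaryGroup (Fin t → I) ℂ := by
  rw [Matrix.mem_unitaryGroup_iff] at hM ⊢
  rw [Matrix.star_eq_conjTranspose, ← tpow_conjTranspose, ← tpow_mul,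
    ← Matrix.star_eq_conjTranspose, hM, tpow_one]

lemma vpow_mulVec (M : Matrix I I ℂ) (v : I → ℂ) (t : ℕ) :
    vpow (M.mulVec v) t = (tpow M t).mulVec (vpow v t) := by
  funext x
  simp only [vpow, Matrix.mulVec, dotProduct, tpow_apply]
  rw [Finset.prod_univ_sum]
  simp [Finset.prod_mul_distrib, vpow]

lemma outer_mulVec (M : Matrix I I ℂ) (v : I → ℂ) :
    outer (M.mulVec v) = M * outer v * Mᴴ := by
  ext a b
  simp only [outer, Matrix.of_apply, Matrix.mul_apply, Matrix.conjTranspose_apply,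
    Matrix.mulVec, dotProduct, Finset.sum_mul, Finset.mul_sum, map_sum]
  refine Finset.sum_congr rfl fun k _ => Finset.sum_congr rfl fun l _ => ?_
  simp only [Matrix.of_apply, _root_.map_mul, starRingEnd_apply]
  ring

lemma stateMoment_mulVec (M : Matrix I I ℂ) (v : I → ℂ) (t : ℕ) :
    stateMoment t (M.mulVec v) = tpow M t * stateMoment t v * (tpow M t)ᴴ := by
  rw [stateMoment, vpow_mulVec, outer_mulVec, stateMoment]

lemma outer_isHermitian {I : Type*} (v : I → ℂ) : (outer v).IsHermitian := by
  ext a b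
  simp [outer, Matrix.conjTranspose_apply, mul_comm]

lemma stateMoment_isHermitian {I : Type*} (t : ℕ) (v : I → ℂ) :
    (stateMoment t v).IsHermitian := outer_isHermitian _

end TPow

section KroneckerUnitary

variable {A B : Type*} [Fintype A] [Fintype B] [DecidableEq A] [DecidableEq B]

lemma star_kronecker (M : Matrix A A ℂ) (N : Matrix B B ℂ) :
    star (M ⊗ₖ N) = star M ⊗ₖ star N := by
  ext a b
  simp [Matrix.star_eq_conjTranspose, Matrix.conjTranspose_apply, Matrix.kroneckerMap_apply]

lemma kronecker_mem_unitaryGroup {M : Matrix A A ℂ} {N : Matrix B B ℂ}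
    (hM : M ∈ Matrix.unitaryGroup A ℂ) (hN : N ∈ Matrix.unitaryGroup B ℂ) :
    M ⊗ₖ N ∈ Matrix.unitaryGroup (A × B) ℂ := by
  rw [Matrix.mem_unitaryGroup_iff] at hM hN ⊢
  rw [star_kronecker, ← Matrix.mul_kronecker_mul, hM, hN, Matrix.one_kronecker_one]

end KroneckerUnitary

/-! ### Trace norm duality for Hermitian matrices -/

section TraceNormDuality

variable {I : Type*} [Fintype I] [DecidableEq I]

lemma traceNorm_hermitian_eq {X : Matrix I I ℂ} (hX : X.IsHermitian) :
    traceNorm X = ∑ i, |hX.eigenvalues i| := by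
  classical
  set Vm : Matrix I I ℂ := (hX.eigenvectorUnitary : Matrix I I ℂ) with hVm
  have hVu : star Vm * Vm = 1 := Unitary.coe_star_mul_self hX.eigenvectorUnitary
  set D0 : Matrix I I ℂ := Matrix.diagonal (RCLike.ofReal ∘ hX.eigenvalues) with hD0
  have hspec : X = Vm * D0 * star Vm := hX.spectral_theorem
  set D : Matrix I I ℂ := Matrix.diagonal (fun i => (RCLike.ofReal |hX.eigenvalues i| : ℂ)) with hD
  have hDpsd : (Matrix.diagonal (fun i => (RCLike.ofReal |hX.eigenvalues i| : ℂ))).PosSemidef := by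
    refine Matrix.posSemidef_diagonal_iff.mpr fun i => ?_
    exact RCLike.ofReal_nonneg.mpr (abs_nonneg _)
  have hSpsd : (Vm * D * star Vm).PosSemidef := hDpsd.mul_mul_conjTranspose_same Vm
  have hsq : (Vm * D * star Vm) ^ 2 = Xᴴ * X := by
    have hXh : Xᴴ = X := hX
    rw [hXh]
    have : X * X = Vm * (D0 * D0) * star Vm := by
      rw [hspec]
      calc Vm * D0 * star Vm * (Vm * D0 * star Vm)
          = Vm * D0 * (star Vm * Vm) * D0 * star Vm := by noncomm_ring
        _ = Vm * (D0 * D0) * star Vm := by rw [hVu]; noncomm_ring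
    rw [this, pow_two]
    have hDD : D * D = D0 * D0 := by
      rw [hD, hD0, Matrix.diagonal_mul_diagonal, Matrix.diagonal_mul_diagonal]
      ext i j
      rcases eq_or_ne i j with rfl | hij
      · simp only [Matrix.diagonal_apply_eq, Function.comp_apply, Pi.mul_apply]
        rw [← RCLike.ofReal_mul, ← RCLike.ofReal_mul, abs_mul_abs_self]
      · simp [Matrix.diagonal_apply_ne _ hij]
    calc Vm * D * star Vm * (Vm * D * star Vm)
        = Vm * D * (star Vm * Vm) * D * star Vm := by noncomm_ring
      _ = Vm * (D * D) * star Vm := by rw [hVu]; noncomm_ring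
      _ = Vm * (D0 * D0) * star Vm := by rw [hDD]
  have hH := (Matrix.posSemidef_conjTranspose_mul_self X).1
  have hcfc1 : cfc Real.sqrt (Xᴴ * X) = (hH.eigenvectorUnitary : Matrix I I ℂ) *
      diagonal (fun i => ((Real.sqrt (hH.eigenvalues i) : ℝ) : ℂ)) *
      (star hH.eigenvectorUnitary : Matrix I I ℂ) := by
    rw [hH.cfc_eq]; rfl
  have hcfc2 : cfc (fun x : ℝ => |x|) X = Vm * D * star Vm := by
    rw [hX.cfc_eq]; rfl
  have hXX : Xᴴ * X = cfc (fun x : ℝ => x ^ 2) X := by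
    have h := cfc_pow_id (R := ℝ) X 2 (ha := (hX : IsSelfAdjoint X))
    rw [pow_two] at h
    rw [hX.eq]
    exact h.symm
  have hS : cfc Real.sqrt (Xᴴ * X) = Vm * D * star Vm := by
    have h := cfc_comp Real.sqrt (fun x : ℝ => x ^ 2) X (ha := (hX : IsSelfAdjoint X))
    have hf : (Real.sqrt ∘ fun x : ℝ => x ^ 2) = fun x => |x| := by
      funext x
      simp [Real.sqrt_sq_eq_abs]
    rw [hf] at h
    rw [hXX]
    exact h.symm.trans hcfc2
  rw [traceNorm, ← hcfc1, hS]
  rw [Matrix.trace_mul_cycle, hVu, Matrix.one_mul, Matrix.trace_diagonal]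
  rw [Complex.re_sum]
  simp

lemma re_trace_unitary_mul_le {X : Matrix I I ℂ} (hX : X.IsHermitian)
    {W : Matrix I I ℂ} (hW : W ∈ Matrix.unitaryGroup I ℂ) :
    ((W * X).trace).re ≤ traceNorm X := by
  classical
  set Vm : Matrix I I ℂ := (hX.eigenvectorUnitary : Matrix I I ℂ) with hVm
  have hVu : star Vm * Vm = 1 := Unitary.coe_star_mul_self hX.eigenvectorUnitary
  have hVmem : Vm ∈ Matrix.unitaryGroup I ℂ := hX.eigenvectorUnitary.2
  set D0 : Matrix I I ℂ := Matrix.diagonal (RCLike.ofReal ∘ hX.eigenvalues) with hD0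
  have hspec : X = Vm * D0 * star Vm := hX.spectral_theorem
  set M : Matrix I I ℂ := star Vm * W * Vm with hM
  have hMmem : M ∈ Matrix.unitaryGroup I ℂ :=
    Submonoid.mul_mem _ (Submonoid.mul_mem _ (Unitary.star_mem hVmem) hW) hVmem
  have htr : (W * X).trace = (M * D0).trace := by
    rw [hspec]
    calc (W * (Vm * D0 * star Vm)).trace
        = ((W * Vm * D0) * star Vm).trace := by noncomm_ring
      _ = (star Vm * (W * Vm * D0)).trace := by rw [Matrix.trace_mul_comm]
      _ = (M * D0).trace := by rw [hM]; noncomm_ring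
  rw [htr, traceNorm_hermitian_eq hX, Matrix.trace]
  have key : ∀ i, ((M * D0).diag i).re ≤ |hX.eigenvalues i| := by
    intro i
    have hentry : (M * D0) i i = M i i * ((hX.eigenvalues i : ℝ) : ℂ) := by
      rw [hD0, Matrix.mul_diagonal]; rfl
    have hMb : ‖M i i‖ ≤ 1 := entry_norm_bound_of_unitary hMmem i i
    have hre : ((M * D0) i i).re = (M i i).re * hX.eigenvalues i := by
      rw [hentry, Complex.mul_re]
      simp
    rw [Matrix.diag_apply, hre]
    calc (M i i).re * hX.eigenvalues i ≤ |(M i i).re * hX.eigenvalues i| := le_abs_self _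
      _ = |(M i i).re| * |hX.eigenvalues i| := abs_mul _ _
      _ ≤ 1 * |hX.eigenvalues i| := by
          refine mul_le_mul_of_nonneg_right ?_ (abs_nonneg _)
          calc |(M i i).re| ≤ ‖M i i‖ := Complex.abs_re_le_norm _
            _ ≤ 1 := hMb
      _ = |hX.eigenvalues i| := one_mul _
  rw [Complex.re_sum]
  exact Finset.sum_le_sum fun i _ => key i

lemma exists_unitary_re_trace_eq {X : Matrix I I ℂ} (hX : X.IsHermitian) :
    ∃ W ∈ Matrix.unitaryGroup I ℂ, ((W * X).trace).re = traceNorm X := by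
  classical
  set Vm : Matrix I I ℂ := (hX.eigenvectorUnitary : Matrix I I ℂ) with hVm
  have hVu : star Vm * Vm = 1 := Unitary.coe_star_mul_self hX.eigenvectorUnitary
  have hVmem : Vm ∈ Matrix.unitaryGroup I ℂ := hX.eigenvectorUnitary.2
  set D0 : Matrix I I ℂ := Matrix.diagonal (RCLike.ofReal ∘ hX.eigenvalues) with hD0
  have hspec : X = Vm * D0 * star Vm := hX.spectral_theorem
  set s : I → ℂ := fun i => if hX.eigenvalues i < 0 then (-1 : ℂ) else 1 with hs
  have hsmem : Matrix.diagonal s ∈ Matrix.unitaryGroup I ℂ := by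
    rw [Matrix.mem_unitaryGroup_iff, Matrix.star_eq_conjTranspose, Matrix.diagonal_conjTranspose,
      Matrix.diagonal_mul_diagonal]
    ext i j
    rcases eq_or_ne i j with rfl | hij
    · by_cases h : hX.eigenvalues i < 0 <;>
        simp [hs, h, Matrix.diagonal_apply_eq, Matrix.one_apply_eq, Pi.star_apply]
    · simp [Matrix.diagonal_apply_ne _ hij, Matrix.one_apply_ne hij]
  refine ⟨Vm * Matrix.diagonal s * star Vm, ?_, ?_⟩
  · exact Submonoid.mul_mem _ (Submonoid.mul_mem _ hVmem hsmem) (Unitary.star_mem hVmem)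
  · have htr : (Vm * Matrix.diagonal s * star Vm * X).trace
        = (Matrix.diagonal s * D0).trace := by
      rw [hspec]
      calc (Vm * Matrix.diagonal s * star Vm * (Vm * D0 * star Vm)).trace
          = (Vm * (Matrix.diagonal s * (star Vm * Vm) * D0) * star Vm).trace := by noncomm_ring
        _ = (Vm * (Matrix.diagonal s * D0) * star Vm).trace := by rw [hVu]; noncomm_ring
        _ = ((Vm * (Matrix.diagonal s * D0)) * star Vm).trace := by noncomm_ring
        _ = (star Vm * (Vm * (Matrix.diagonal s * D0))).trace := by
            rw [Matrix.trace_mul_comm]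
        _ = ((star Vm * Vm) * (Matrix.diagonal s * D0)).trace := by noncomm_ring
        _ = (Matrix.diagonal s * D0).trace := by rw [hVu, Matrix.one_mul]
    rw [htr, traceNorm_hermitian_eq hX, Matrix.diagonal_mul_diagonal, Matrix.trace_diagonal,
      Complex.re_sum]
    refine Finset.sum_congr rfl fun i _ => ?_
    rw [hs]
    by_cases h : hX.eigenvalues i < 0
    · simp only [h, if_true, Function.comp_apply]
      rw [abs_of_neg h]
      simp
    · simp only [h, if_false, Function.comp_apply]
      rw [abs_of_nonneg (not_lt.1 h), one_mul]
      exact Complex.ofReal_re _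

end TraceNormDuality

/-! ### Topological and measure-theoretic infrastructure on unitary groups -/

section UnitaryGroupInstances

variable (n : Type*) [Fintype n] [DecidableEq n]

instance : IsTopologicalGroup (Matrix.unitaryGroup n ℂ) where
  continuous_mul := by
    apply Continuous.subtype_mk
    exact ((continuous_subtype_val.comp continuous_fst).matrix_mul
      (continuous_subtype_val.comp continuous_snd))
  continuous_inv := by
    apply Continuous.subtype_mk
    exact continuous_subtype_val.matrix_conjTranspose

instance : CompactSpace (Matrix.unitaryGroup n ℂ) := by
  refine isCompact_iff_compactSpace.mp ?_
  have hsub : (Matrix.unitaryGroup n ℂ : Set (Matrix n n ℂ)) ⊆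
      Set.pi Set.univ (fun _ : n => Set.pi Set.univ fun _ : n => Metric.closedBall (0 : ℂ) 1) := by
    intro U hU
    intro i _
    intro j _
    rw [Metric.mem_closedBall, dist_zero_right]
    exact entry_norm_bound_of_unitary hU i j
  have hcomp : IsCompact (Set.pi Set.univ
      (fun _ : n => Set.pi Set.univ fun _ : n => Metric.closedBall (0 : ℂ) 1)) := by
    refine isCompact_univ_pi fun i => isCompact_univ_pi fun j => ?_
    exact isCompact_closedBall 0 1
  have hclosed : IsClosed (Matrix.unitaryGroup n ℂ : Set (Matrix n n ℂ)) := by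
    have : (Matrix.unitaryGroup n ℂ : Set (Matrix n n ℂ)) =
        (fun A : Matrix n n ℂ => (star A * A, A * star A)) ⁻¹'
          {((1 : Matrix n n ℂ), (1 : Matrix n n ℂ))} := by
      ext A
      simp only [Set.mem_preimage, Set.mem_singleton_iff, Prod.mk.injEq]
      exact ⟨fun h => ⟨h.1, h.2⟩, fun h => ⟨h.1, h.2⟩⟩
    rw [this]
    apply IsClosed.preimage
    · exact (continuous_id.matrix_conjTranspose.matrix_mul continuous_id).prodMk
        (continuous_id.matrix_mul continuous_id.matrix_conjTranspose)
    · exact isClosed_singleton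
  exact hcomp.of_isClosed_subset hclosed hsub


instance : BorelSpace (Matrix n n ℂ) :=
  inferInstanceAs (BorelSpace (n → n → ℂ))

instance : SecondCountableTopology (Matrix n n ℂ) :=
  inferInstanceAs (SecondCountableTopology (n → n → ℂ))

instance : BorelSpace (Matrix.unitaryGroup n ℂ) :=
  Subtype.borelSpace (Matrix.unitaryGroup n ℂ : Set (Matrix n n ℂ))

instance : SecondCountableTopology (Matrix.unitaryGroup n ℂ) :=
  TopologicalSpace.Subtype.secondCountableTopology (Matrix.unitaryGroup n ℂ : Set (Matrix n n ℂ))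

end UnitaryGroupInstances

section RightInvariance

variable {G : Type*} [Group G] [TopologicalSpace G] [IsTopologicalGroup G] [CompactSpace G]
  [MeasurableSpace G] [BorelSpace G]

lemma map_mul_right_eq_self_of_compact (ν : Measure G) [ν.IsHaarMeasure]
    [IsProbabilityMeasure ν] (g : G) : Measure.map (· * g) ν = ν := by
  have hmeas : Measurable (· * g) := measurable_mul_const g
  have hlinv : (Measure.map (· * g) ν).IsMulLeftInvariant := by
    constructor
    intro h
    rw [Measure.map_map (measurable_const_mul h) hmeas]
    have heq : ((h * ·) ∘ (· * g)) = ((· * g) ∘ (h * ·)) := by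
      funext x; simp [mul_assoc]
    rw [heq, ← Measure.map_map hmeas (measurable_const_mul h),
      map_mul_left_eq_self]
  have hprob : IsProbabilityMeasure (Measure.map (· * g) ν) :=
    Measure.isProbabilityMeasure_map hmeas.aemeasurable
  have h := Measure.isMulInvariant_eq_smul_of_compactSpace (Measure.map (· * g) ν) ν
  have huniv := congrArg (fun m : Measure G => m Set.univ) h
  simp only [measure_univ, Measure.smul_apply, smul_eq_mul, mul_one] at huniv
  have hc : ((Measure.map (· * g) ν).haarScalarFactor ν : ℝ≥0∞) = 1 := by
    simpa [ENNReal.smul_def] using huniv.symm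
  have hc' : (Measure.map (· * g) ν).haarScalarFactor ν = 1 := by exact_mod_cast hc
  rw [h, hc', one_smul]

lemma integral_mul_right_eq_self_of_compact {E : Type*} [NormedAddCommGroup E]
    [NormedSpace ℝ E] (ν : Measure G) [ν.IsHaarMeasure] [IsProbabilityMeasure ν]
    (f : G → E) (g : G) :
    ∫ x, f (x * g) ∂ν = ∫ x, f x ∂ν := by
  have h : MeasurableEmbedding (fun x : G => x * g) :=
    (MeasurableEquiv.mulRight g).measurableEmbedding
  rw [← h.integral_map, map_mul_right_eq_self_of_compact ν g]

end RightInvariance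

/-! ### Integral interchange lemmas for matrices -/

section MatrixIntegral

variable {α : Type*} [MeasurableSpace α] {I : Type*} [Fintype I] [DecidableEq I]

/-- Matrix entry as a continuous linear map. -/
def entryCLM (i j : I) : Matrix I I ℂ →L[ℂ] ℂ :=
  LinearMap.toContinuousLinearMap
    { toFun := fun X => X i j
      map_add' := fun _ _ => rfl
      map_smul' := fun _ _ => rfl }

lemma integral_entry {κ : Measure α} {f : α → Matrix I I ℂ} (hf : Integrable f κ) (i j : I) :
    (∫ x, f x ∂κ) i j = ∫ x, f x i j ∂κ :=
  ((entryCLM i j).integral_comp_comm hf).symm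

/-- Conjugation `X ↦ A * X * B` as a continuous linear map. -/
def conjCLM (A B : Matrix I I ℂ) : Matrix I I ℂ →L[ℂ] Matrix I I ℂ :=
  LinearMap.toContinuousLinearMap
    { toFun := fun X => A * X * B
      map_add' := fun X Y => by noncomm_ring
      map_smul' := fun c X => by simp [Matrix.mul_smul, Matrix.smul_mul] }

lemma integral_conj_mul {κ : Measure α} {f : α → Matrix I I ℂ} (hf : Integrable f κ)
    (A B : Matrix I I ℂ) :
    ∫ x, A * f x * B ∂κ = A * (∫ x, f x ∂κ) * B :=
  ((conjCLM A B).integral_comp_comm hf)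

/-- `X ↦ tr (W * X)` as a continuous linear map. -/
def traceCLM (W : Matrix I I ℂ) : Matrix I I ℂ →L[ℂ] ℂ :=
  LinearMap.toContinuousLinearMap
    { toFun := fun X => (W * X).trace
      map_add' := fun X Y => by simp [Matrix.mul_add]
      map_smul' := fun c X => by simp [Matrix.mul_smul] }

lemma integral_trace_mul {κ : Measure α} {f : α → Matrix I I ℂ} (hf : Integrable f κ)
    (W : Matrix I I ℂ) :
    (W * ∫ x, f x ∂κ).trace = ∫ x, (W * f x).trace ∂κ :=
  ((traceCLM W).integral_comp_comm hf).symm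

lemma isHermitian_integral {κ : Measure α} {f : α → Matrix I I ℂ} (hf : Integrable f κ)
    (h : ∀ x, (f x).IsHermitian) : (∫ x, f x ∂κ).IsHermitian := by
  show _ᴴ = _
  ext i j
  rw [Matrix.conjTranspose_apply, integral_entry hf, integral_entry hf]
  rw [show (star (∫ x, f x j i ∂κ)) = (starRingEnd ℂ) (∫ x, f x j i ∂κ) from rfl,
    ← integral_conj]
  exact integral_congr_ae (Filter.Eventually.of_forall fun x =>
    congrFun (congrFun (h x) i) j)

end MatrixIntegral

/-! ### Continuity and integrability -/

section ContinuityIntegrability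

variable {X : Type*} [TopologicalSpace X] {I : Type*} [Fintype I] [DecidableEq I]

lemma continuous_stateMoment {t : ℕ} {F : X → I → ℂ} (hF : Continuous F) :
    Continuous fun x => stateMoment t (F x) := by
  apply continuous_matrix
  intro a b
  simp only [stateMoment, outer, vpow, Matrix.of_apply]
  refine Continuous.mul ?_ ?_
  · exact continuous_finset_prod _ fun i _ => (continuous_apply (a i)).comp hF
  · exact Complex.continuous_conj.comp <|
      continuous_finset_prod _ fun i _ => (continuous_apply (b i)).comp hF

lemma integrable_of_continuous {Y : Type*} [MeasurableSpace X] [OpensMeasurableSpace X]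
    [CompactSpace X] [NormedAddCommGroup Y] [SecondCountableTopology X]
    {f : X → Y} (hf : Continuous f) (κ : Measure X) [IsFiniteMeasure κ] :
    Integrable f κ := by
  have hsupp : HasCompactSupport f :=
    isCompact_univ.of_isClosed_subset (isClosed_tsupport f) (Set.subset_univ _)
  exact hf.integrable_of_hasCompactSupport hsupp

end ContinuityIntegrability

/-! ### The key convexity inequality -/

section KeyInequality

variable {α : Type*} [MeasurableSpace α] {I : Type*} [Fintype I] [DecidableEq I]

lemma traceNorm_integral_conj_le (κ : Measure α) [IsProbabilityMeasure κ]
    {D : Matrix I I ℂ} (hD : D.IsHermitian)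
    {K : α → Matrix I I ℂ} (hKu : ∀ x, K x ∈ Matrix.unitaryGroup I ℂ)
    (hKint : Integrable (fun x => K x * D * (K x)ᴴ) κ)
    {Y : Matrix I I ℂ} (hY : Y = ∫ x, K x * D * (K x)ᴴ ∂κ) (hYh : Y.IsHermitian) :
    traceNorm Y ≤ traceNorm D := by
  obtain ⟨W, hWmem, hWeq⟩ := exists_unitary_re_trace_eq hYh
  have hint2 : Integrable (fun x => (W * (K x * D * (K x)ᴴ)).trace) κ :=
    (traceCLM W).integrable_comp hKint
  have htr : (W * Y).trace = ∫ x, (W * (K x * D * (K x)ᴴ)).trace ∂κ := by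
    rw [hY, integral_trace_mul hKint]
  have hbound : ∀ x, ((W * (K x * D * (K x)ᴴ)).trace).re ≤ traceNorm D := by
    intro x
    have hrw : (W * (K x * D * (K x)ᴴ)).trace = (((K x)ᴴ * W * K x) * D).trace := by
      calc (W * (K x * D * (K x)ᴴ)).trace
          = ((W * K x * D) * (K x)ᴴ).trace := by noncomm_ring
        _ = ((K x)ᴴ * (W * K x * D)).trace := by rw [Matrix.trace_mul_comm]
        _ = (((K x)ᴴ * W * K x) * D).trace := by noncomm_ring
    rw [hrw]
    refine re_trace_unitary_mul_le hD ?_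
    have h1 : star (K x) ∈ Matrix.unitaryGroup I ℂ := Unitary.star_mem (hKu x)
    exact Submonoid.mul_mem _ (Submonoid.mul_mem _ h1 hWmem) (hKu x)
  calc traceNorm Y = ((W * Y).trace).re := hWeq.symm
    _ = (∫ x, (W * (K x * D * (K x)ᴴ)).trace ∂κ).re := by rw [htr]
    _ = ∫ x, ((W * (K x * D * (K x)ᴴ)).trace).re ∂κ := (integral_re hint2).symm
    _ ≤ ∫ _x, traceNorm D ∂κ := by
        refine integral_mono (hint2.re) (integrable_const _) fun x => hbound x
    _ = traceNorm D := by simp [measure_univ]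

end KeyInequality

/-! ### The specific moment functions -/

section MomentFunctions

variable {NA NB : ℕ}

/-- The integrand of `localMoment`. -/
def momF (t : ℕ) (ψ : Fin NA × Fin NB → ℂ)
    (U : Matrix.unitaryGroup (Fin NA) ℂ × Matrix.unitaryGroup (Fin NB) ℂ) :
    Matrix (Fin t → Fin NA × Fin NB) (Fin t → Fin NA × Fin NB) ℂ :=
  stateMoment t
    (((U.1 : Matrix (Fin NA) (Fin NA) ℂ) ⊗ₖ (U.2 : Matrix (Fin NB) (Fin NB) ℂ)).mulVec ψ)

/-- The tensor-power conjugator. -/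
def conjK (t : ℕ)
    (U : Matrix.unitaryGroup (Fin NA) ℂ × Matrix.unitaryGroup (Fin NB) ℂ) :
    Matrix (Fin t → Fin NA × Fin NB) (Fin t → Fin NA × Fin NB) ℂ :=
  tpow ((U.1 : Matrix (Fin NA) (Fin NA) ℂ) ⊗ₖ (U.2 : Matrix (Fin NB) (Fin NB) ℂ)) t

lemma localMoment_eq (t : ℕ)
    (κ : Measure (Matrix.unitaryGroup (Fin NA) ℂ × Matrix.unitaryGroup (Fin NB) ℂ))
    (ψ : Fin NA × Fin NB → ℂ) :
    localMoment t κ ψ = ∫ U, momF t ψ U ∂κ := rfl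

lemma kron_coe_mul (U V : Matrix.unitaryGroup (Fin NA) ℂ × Matrix.unitaryGroup (Fin NB) ℂ) :
    (((U * V).1 : Matrix (Fin NA) (Fin NA) ℂ) ⊗ₖ ((U * V).2 : Matrix (Fin NB) (Fin NB) ℂ))
      = ((U.1 : Matrix (Fin NA) (Fin NA) ℂ) ⊗ₖ (U.2 : Matrix (Fin NB) (Fin NB) ℂ))
        * ((V.1 : Matrix (Fin NA) (Fin NA) ℂ) ⊗ₖ (V.2 : Matrix (Fin NB) (Fin NB) ℂ)) := by
  rw [← Matrix.mul_kronecker_mul]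
  rfl

lemma conjK_mem (t : ℕ)
    (U : Matrix.unitaryGroup (Fin NA) ℂ × Matrix.unitaryGroup (Fin NB) ℂ) :
    conjK t U ∈ Matrix.unitaryGroup (Fin t → Fin NA × Fin NB) ℂ :=
  tpow_mem_unitaryGroup (kronecker_mem_unitaryGroup U.1.2 U.2.2) t

lemma momF_mul (t : ℕ) (ψ : Fin NA × Fin NB → ℂ)
    (U V : Matrix.unitaryGroup (Fin NA) ℂ × Matrix.unitaryGroup (Fin NB) ℂ) :
    momF t ψ (U * V) = conjK t U * momF t ψ V * (conjK t U)ᴴ := by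
  rw [momF, kron_coe_mul, ← Matrix.mulVec_mulVec, stateMoment_mulVec]
  rfl

lemma continuous_kron :
    Continuous fun U : Matrix.unitaryGroup (Fin NA) ℂ × Matrix.unitaryGroup (Fin NB) ℂ =>
      ((U.1 : Matrix (Fin NA) (Fin NA) ℂ) ⊗ₖ (U.2 : Matrix (Fin NB) (Fin NB) ℂ)) := by
  apply continuous_matrix
  rintro ⟨a1, a2⟩ ⟨b1, b2⟩
  exact ((continuous_subtype_val.comp continuous_fst).matrix_elem a1 b1).mul
    ((continuous_subtype_val.comp continuous_snd).matrix_elem a2 b2)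

lemma continuous_momF (t : ℕ) (ψ : Fin NA × Fin NB → ℂ) :
    Continuous (momF (NA := NA) (NB := NB) t ψ) :=
  continuous_stateMoment (continuous_kron.matrix_mulVec continuous_const)

lemma continuous_conjK (t : ℕ) :
    Continuous (conjK (NA := NA) (NB := NB) t) := by
  apply continuous_matrix
  intro x y
  simp only [conjK, tpow_apply]
  exact continuous_finset_prod _ fun i _ => continuous_kron.matrix_elem (x i) (y i)

end MomentFunctions

/-! ### Main theorem -/

set_option maxHeartbeats 1000000 in
/-- Among all ensembles generated from `ψ` by local (non-entangling)
unitaries, the uniformly-random local-unitary orbit is closest in trace distance to the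
Haar-random state moments. -/
theorem local_haar_uniform_is_closest
    (t NA NB : ℕ) (ht : 1 ≤ t) (hNA : 2 ≤ NA) (hNB : 2 ≤ NB)
    (ψ : Fin NA × Fin NB → ℂ) (hψ : IsUnitVec ψ)
    (μA : Measure (Matrix.unitaryGroup (Fin NA) ℂ))
    (hμA : μA.IsHaarMeasure) (hμA1 : IsProbabilityMeasure μA)
    (μB : Measure (Matrix.unitaryGroup (Fin NB) ℂ))
    (hμB : μB.IsHaarMeasure) (hμB1 : IsProbabilityMeasure μB)
    (μ : Measure (Matrix.unitaryGroup (Fin NA) ℂ × Matrix.unitaryGroup (Fin NB) ℂ))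
    (hμ1 : IsProbabilityMeasure μ)
    (μH : Measure (Matrix.unitaryGroup (Fin NA × Fin NB) ℂ))
    (hμH : μH.IsHaarMeasure) (hμH1 : IsProbabilityMeasure μH)
    (φ : Fin NA × Fin NB → ℂ) (hφ : IsUnitVec φ) :
    traceDist (localMoment t (μA.prod μB) ψ) (haarMoment t μH φ)
      ≤ traceDist (localMoment t μ ψ) (haarMoment t μH φ) := by
  classical
  haveI := hμA; haveI := hμA1; haveI := hμB; haveI := hμB1
  haveI := hμ1; haveI := hμH; haveI := hμH1
  set ν := μA.prod μB with hν_def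
  haveI : IsProbabilityMeasure ν := by rw [hν_def]; infer_instance
  set FH : Matrix.unitaryGroup (Fin NA × Fin NB) ℂ →
      Matrix (Fin t → Fin NA × Fin NB) (Fin t → Fin NA × Fin NB) ℂ := fun U =>
    stateMoment t ((U : Matrix (Fin NA × Fin NB) (Fin NA × Fin NB) ℂ).mulVec φ) with hFH_def
  have hFH_cont : Continuous FH :=
    continuous_stateMoment (continuous_subtype_val.matrix_mulVec continuous_const)
  have hFH_int : Integrable FH μH := integrable_of_continuous hFH_cont μH
  have hf_cont := continuous_momF (NA := NA) (NB := NB) t ψ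
  have hf_int : ∀ (κ : Measure (Matrix.unitaryGroup (Fin NA) ℂ ×
      Matrix.unitaryGroup (Fin NB) ℂ)) [IsProbabilityMeasure κ],
      Integrable (momF t ψ) κ := fun κ _ => integrable_of_continuous hf_cont κ
  set ρH := haarMoment t μH φ with hρH_def
  set Mν := localMoment t ν ψ with hMν_def
  set Mμ := localMoment t μ ψ with hMμ_def
  -- Hermitian properties
  have hρH_herm : ρH.IsHermitian :=
    isHermitian_integral hFH_int fun U => stateMoment_isHermitian _ _
  have hMμ_herm : Mμ.IsHermitian :=
    isHermitian_integral (hf_int μ) fun U => stateMoment_isHermitian _ _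
  have hMν_herm : Mν.IsHermitian :=
    isHermitian_integral (hf_int ν) fun U => stateMoment_isHermitian _ _
  -- invariance of the Haar moment under conjugation by local tensor-power unitaries
  have hρH_inv : ∀ U, conjK t U * ρH * (conjK t U)ᴴ = ρH := by
    intro U
    set w : Matrix.unitaryGroup (Fin NA × Fin NB) ℂ :=
      ⟨(U.1 : Matrix (Fin NA) (Fin NA) ℂ) ⊗ₖ (U.2 : Matrix (Fin NB) (Fin NB) ℂ),
        kronecker_mem_unitaryGroup U.1.2 U.2.2⟩ with hw_def
    have step1 : conjK t U * ρH * (conjK t U)ᴴ = ∫ V, FH (w * V) ∂μH := by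
      rw [hρH_def, haarMoment, ← integral_conj_mul hFH_int]
      refine integral_congr_ae (Filter.Eventually.of_forall fun V => ?_)
      have hcoe : ((w * V : Matrix.unitaryGroup (Fin NA × Fin NB) ℂ) :
          Matrix (Fin NA × Fin NB) (Fin NA × Fin NB) ℂ) =
          ((U.1 : Matrix (Fin NA) (Fin NA) ℂ) ⊗ₖ (U.2 : Matrix (Fin NB) (Fin NB) ℂ)) *
            (V : Matrix (Fin NA × Fin NB) (Fin NA × Fin NB) ℂ) := rfl
      have hfwd : FH (w * V) = conjK t U * FH V * (conjK t U)ᴴ := by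
        rw [hFH_def]
        simp only
        rw [hcoe, ← Matrix.mulVec_mulVec, stateMoment_mulVec]
        rfl
      exact hfwd.symm
    rw [step1, integral_mul_left_eq_self (μ := μH) FH w]
    rw [hρH_def, haarMoment]
  -- Step 1: right invariance of the product Haar measure
  have h1 : ∀ V, ∫ U, momF t ψ (U * V) ∂ν = Mν := by
    intro V
    rw [hMν_def, localMoment_eq]
    exact integral_mul_right_eq_self_of_compact ν (momF t ψ) V
  -- Step 2+3: Fubini
  have hswap_int : Integrable (fun p : (Matrix.unitaryGroup (Fin NA) ℂ ×
      Matrix.unitaryGroup (Fin NB) ℂ) × (Matrix.unitaryGroup (Fin NA) ℂ ×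
      Matrix.unitaryGroup (Fin NB) ℂ) => momF t ψ (p.2 * p.1)) (μ.prod ν) := by
    apply integrable_of_continuous
    exact hf_cont.comp (continuous_snd.mul continuous_fst)
  have h23 : Mν = ∫ U, (∫ V, momF t ψ (U * V) ∂μ) ∂ν := by
    have e1 : Mν = ∫ V, (∫ U, momF t ψ (U * V) ∂ν) ∂μ := by
      rw [integral_congr_ae (Filter.Eventually.of_forall fun V => h1 V)]
      simp [measure_univ]
    rw [e1]
    exact integral_integral_swap hswap_int
  -- Step 4: inner integral
  have h4 : ∀ U, ∫ V, momF t ψ (U * V) ∂μ = conjK t U * Mμ * (conjK t U)ᴴ := by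
    intro U
    rw [integral_congr_ae (Filter.Eventually.of_forall fun V => momF_mul t ψ U V)]
    rw [integral_conj_mul (hf_int μ) (conjK t U) ((conjK t U)ᴴ)]
    rw [hMμ_def, localMoment_eq]
  have h5 : Mν = ∫ U, conjK t U * Mμ * (conjK t U)ᴴ ∂ν := by
    rw [h23]
    exact integral_congr_ae (Filter.Eventually.of_forall fun U => h4 U)
  -- Step 5: conjugation-average of ρH
  have h6 : ρH = ∫ U, conjK t U * ρH * (conjK t U)ᴴ ∂ν := by
    rw [integral_congr_ae (Filter.Eventually.of_forall fun U => hρH_inv U)]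
    simp [measure_univ]
  -- integrability of conjugated constants
  have hconj_int : ∀ C : Matrix (Fin t → Fin NA × Fin NB) (Fin t → Fin NA × Fin NB) ℂ,
      Integrable (fun U => conjK t U * C * (conjK t U)ᴴ) ν := by
    intro C
    apply integrable_of_continuous
    exact ((continuous_conjK t).matrix_mul continuous_const).matrix_mul
      (continuous_conjK t).matrix_conjTranspose
  -- Step 6: difference
  have h7 : Mν - ρH = ∫ U, conjK t U * (Mμ - ρH) * (conjK t U)ᴴ ∂ν := by
    have e : (fun U => conjK t U * (Mμ - ρH) * (conjK t U)ᴴ) =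
        fun U => conjK t U * Mμ * (conjK t U)ᴴ - conjK t U * ρH * (conjK t U)ᴴ := by
      funext U
      rw [Matrix.mul_sub, Matrix.sub_mul]
    rw [e, integral_sub (hconj_int Mμ) (hconj_int ρH), ← h5, ← h6]
  -- Conclusion via the key inequality
  have hdiff_herm : (Mν - ρH).IsHermitian := hMν_herm.sub hρH_herm
  have hD_herm : (Mμ - ρH).IsHermitian := hMμ_herm.sub hρH_herm
  have hkey : traceNorm (Mν - ρH) ≤ traceNorm (Mμ - ρH) :=
    traceNorm_integral_conj_le ν hD_herm (conjK_mem t)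
      (hconj_int (Mμ - ρH)) h7 hdiff_herm
  rw [traceDist, traceDist]
  linarith

end
end

section
/- Let α > 0 with α ≠ 2, let a, b be real constants with 0 < a ≤ 1 and b ≥ 1, and let C₁, C₂, C₁', C₂' > 0. Then there exist a natural number L ≥ 1 and a probability distribution p on Fin L such that either C₂'·exp(−b·R_α(p)) < C₁·exp(−R₂(p)) or C₂·exp(−R₂(p)) < C₁'·exp(−a·R_α(p)). Consequently, there is no function ε assigning a real number to every finite probability distribution that satisfies both C₁·exp(−R₂(p)) ≤ ε(p) ≤ C₂·exp(−R₂(p)) and C₁'·exp(−a·R_α(p)) ≤ ε(p) ≤ C₂'·exp(−b·R_α(p)) for all finite probability distributions p: only the second Rényi entropy can tightly bound such a quantity. -/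
open Finset Filter

noncomputable section

/-- Rényi entropy of order `α` of a distribution on `Fin L` (Shannon entropy at `α = 1`),
with natural logarithms, the sums running over the support of `p`. -/
def renyi {L : ℕ} (α : ℝ) (p : Fin L → ℝ) : ℝ :=
  if α = 1 then -∑ s, (if 0 < p s then p s * Real.log (p s) else 0)
  else (1 - α)⁻¹ * Real.log (∑ s, (if 0 < p s then p s ^ α else 0))

lemma exists_nat_log_gt (r : ℝ) : ∃ n : ℕ, 2 ≤ n ∧ r < Real.log n := by
  obtain ⟨n, hn⟩ := exists_nat_gt (max 2 (Real.exp r))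
  have h2 : (2:ℝ) < n := lt_of_le_of_lt (le_max_left _ _) hn
  refine ⟨n, by exact_mod_cast h2.le, ?_⟩
  have : Real.exp r < n := lt_of_le_of_lt (le_max_right _ _) hn
  calc r = Real.log (Real.exp r) := (Real.log_exp r).symm
    _ < Real.log n := Real.log_lt_log (Real.exp_pos r) this

lemma exp_ineq (C D x y : ℝ) (hC : 0 < C) (hD : 0 < D)
    (h : Real.log C + (-x) < Real.log D + (-y)) :
    C * Real.exp (-x) < D * Real.exp (-y) := by
  rw [← Real.exp_log hC, ← Real.exp_log hD, ← Real.exp_add, ← Real.exp_add]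
  exact Real.exp_lt_exp.mpr h

lemma pdist_sum {M : ℕ} (hM : 0 < M) (t : ℝ) :
    ∑ s : Fin (M+1), (if s = 0 then t else (1-t)/M) = 1 := by
  rw [Fin.sum_univ_succ]
  simp only [if_pos rfl, Fin.succ_ne_zero, if_false, Finset.sum_const, card_univ,
    Fintype.card_fin, nsmul_eq_mul]
  field_simp
  simp only [ite_true]; ring

lemma renyi_eval {M : ℕ} (hM : 0 < M) (t : ℝ) (ht : 0 < t) (ht1 : t < 1) {α : ℝ} (hα : α ≠ 1) :
    renyi α (fun s : Fin (M+1) => if s = 0 then t else (1-t)/M)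
      = (1-α)⁻¹ * Real.log (t ^ α + M * ((1-t)/M) ^ α) := by
  have hq : 0 < (1-t)/M := div_pos (by linarith) (by exact_mod_cast hM)
  rw [renyi, if_neg hα]
  congr 1
  rw [Fin.sum_univ_succ]
  simp only [if_pos rfl, Fin.succ_ne_zero, if_false, if_pos ht, if_pos hq,
    Finset.sum_const, card_univ, Fintype.card_fin, nsmul_eq_mul, eq_self_iff_true, if_true]

lemma shannon_eval {M : ℕ} (hM : 0 < M) (t : ℝ) (ht : 0 < t) (ht1 : t < 1) :
    renyi 1 (fun s : Fin (M+1) => if s = 0 then t else (1-t)/M)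
      = -(t * Real.log t + (1-t) * Real.log ((1-t)/M)) := by
  have hq : 0 < (1-t)/M := div_pos (by linarith) (by exact_mod_cast hM)
  have hM' : (M:ℝ) ≠ 0 := by positivity
  rw [renyi, if_pos rfl]
  congr 1
  rw [Fin.sum_univ_succ]
  simp only [if_pos rfl, Fin.succ_ne_zero, if_false, if_pos ht, if_pos hq,
    Finset.sum_const, card_univ, Fintype.card_fin, nsmul_eq_mul, eq_self_iff_true, if_true]
  have h1 : (M:ℝ) * ((1-t)/M) = 1 - t := by field_simp
  rw [← mul_assoc, h1]

/-- Case α > 1: a family whose Rényi-α entropy ≈ (α/(α-1))·X and R₂ ≈ 2X with X arbitrarily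
large. -/
lemma caseB (α : ℝ) (hα1 : 1 < α) (r : ℝ) (hr : Real.log 2 ≤ r) :
    ∃ (L : ℕ) (p : Fin L → ℝ), 1 ≤ L ∧ (∀ s, 0 ≤ p s) ∧ (∑ s, p s = 1) ∧
      ∃ X : ℝ, r < X ∧ Real.log 2 < X ∧
        (α - 1) * renyi α p ≤ α * X ∧ α * X - Real.log 2 ≤ (α - 1) * renyi α p ∧
        2 * X - Real.log 2 ≤ renyi 2 p ∧ renyi 2 p ≤ 2 * X := by
  obtain ⟨n, hn2, hnlog⟩ := exists_nat_log_gt r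
  set k : ℕ := ⌈α / (α - 1)⌉₊ + 2 with hk
  have hα1' : (0:ℝ) < α - 1 := by linarith
  have hα0 : (0:ℝ) < α := by linarith
  have hkc : α / (α - 1) ≤ (k:ℝ) := by
    have h1 : α / (α - 1) ≤ (⌈α / (α - 1)⌉₊ : ℝ) := Nat.le_ceil _
    have h2 : ((⌈α / (α - 1)⌉₊ : ℕ) : ℝ) ≤ (k:ℝ) := by exact_mod_cast Nat.le_add_right _ 2
    linarith
  have hαk : α ≤ (k:ℝ) * (α - 1) := by
    rw [div_le_iff₀ hα1'] at hkc; linarith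
  have hk2 : 2 ≤ k := by omega
  set x : ℝ := (n:ℝ) with hxdef
  have hx2 : (2:ℝ) ≤ x := by rw [hxdef]; exact_mod_cast hn2
  have hx1 : (1:ℝ) < x := by linarith
  have hx0 : (0:ℝ) < x := by linarith
  set M : ℕ := n ^ k with hMdef
  have hM0 : 0 < M := Nat.pow_pos (by omega)
  have hMr : ((M:ℕ):ℝ) = x ^ k := by push_cast [hMdef]; ring
  have hMr0 : (0:ℝ) < (M:ℝ) := by exact_mod_cast hM0
  have ht : (0:ℝ) < x⁻¹ := by positivity
  have ht1 : x⁻¹ < 1 := inv_lt_one_of_one_lt₀ hx1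
  have h1t : (0:ℝ) < 1 - x⁻¹ := by linarith
  refine ⟨M + 1, fun s : Fin (M+1) => if s = 0 then x⁻¹ else (1 - x⁻¹)/M, Nat.succ_le_succ (Nat.zero_le M), ?_, ?_, ?_⟩
  · intro s; dsimp only; split
    · positivity
    · positivity
  · exact pdist_sum hM0 _
  set X := Real.log x with hXdef
  have hX : r < X := hnlog
  have hlog2 : Real.log 2 < X := lt_of_le_of_lt hr hX
  have hlog2pos : (0:ℝ) < Real.log 2 := Real.log_pos (by norm_num)
  refine ⟨X, hX, hlog2, ?_⟩
  -- Rényi α bounds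
  set S : ℝ := x⁻¹ ^ α + M * ((1 - x⁻¹)/M) ^ α with hSdef
  have hinv : x⁻¹ ^ α = x ^ (-α) := by
    rw [Real.inv_rpow hx0.le, Real.rpow_neg hx0.le]
  have hSlow : x ^ (-α) ≤ S := by
    have : (0:ℝ) ≤ (M:ℝ) * ((1 - x⁻¹)/M) ^ α := by positivity
    rw [hSdef, ← hinv]; linarith
  have hterm : (M:ℝ) * ((1 - x⁻¹)/M) ^ α ≤ x ^ (-α) := by
    have hstep1 : ((1 - x⁻¹)/M) ^ α ≤ ((M:ℝ)⁻¹) ^ α := by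
      apply Real.rpow_le_rpow (by positivity) _ hα0.le
      rw [div_le_iff₀ hMr0, inv_mul_cancel₀ (ne_of_gt hMr0)]
      linarith
    have hstep2 : (M:ℝ) * ((M:ℝ)⁻¹) ^ α = (M:ℝ) ^ (1 - α) := by
      rw [Real.inv_rpow hMr0.le, show (1:ℝ) - α = 1 + (-α) by ring,
        Real.rpow_add hMr0, Real.rpow_one, Real.rpow_neg hMr0.le]
    have hstep3 : (M:ℝ) ^ ((1:ℝ) - α) = x ^ ((k:ℝ) * (1 - α)) := by
      rw [hMr, ← Real.rpow_natCast x k, ← Real.rpow_mul hx0.le]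
    have hstep4 : x ^ ((k:ℝ) * (1 - α)) ≤ x ^ (-α) := by
      apply (Real.rpow_le_rpow_left_iff hx1).mpr
      nlinarith
    calc (M:ℝ) * ((1 - x⁻¹)/M) ^ α ≤ (M:ℝ) * ((M:ℝ)⁻¹) ^ α := by
          apply mul_le_mul_of_nonneg_left hstep1 hMr0.le
      _ = (M:ℝ) ^ ((1:ℝ) - α) := hstep2
      _ = x ^ ((k:ℝ) * (1 - α)) := hstep3
      _ ≤ x ^ (-α) := hstep4
  have hSup : S ≤ 2 * x ^ (-α) := by
    have h0 : S = x ^ (-α) + (M:ℝ) * ((1 - x⁻¹)/M) ^ α := by rw [hSdef, hinv]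
    rw [h0]; linarith
  have hxa : (0:ℝ) < x ^ (-α) := Real.rpow_pos_of_pos hx0 _
  have hSpos : (0:ℝ) < S := lt_of_lt_of_le hxa hSlow
  have hlogxa : Real.log (x ^ (-α)) = -α * X := by
    rw [Real.log_rpow hx0]
  have hlogSlow : -α * X ≤ Real.log S := by
    rw [← hlogxa]; exact Real.log_le_log hxa hSlow
  have hlogSup : Real.log S ≤ Real.log 2 + (-α * X) := by
    calc Real.log S ≤ Real.log (2 * x ^ (-α)) := Real.log_le_log hSpos hSup
      _ = Real.log 2 + Real.log (x ^ (-α)) := Real.log_mul (by norm_num) (ne_of_gt hxa)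
      _ = Real.log 2 + (-α * X) := by rw [hlogxa]
  have hu : (1 - α) * renyi α (fun s : Fin (M+1) => if s = 0 then x⁻¹ else (1 - x⁻¹)/M)
      = Real.log S := by
    rw [renyi_eval hM0 _ ht ht1 (by linarith : α ≠ 1), ← mul_assoc,
      mul_inv_cancel₀ (by linarith : (1:ℝ) - α ≠ 0), one_mul]
  -- Rényi 2 bounds
  have hsq : ∀ y : ℝ, y ^ (2:ℝ) = y ^ 2 := fun y => by
    rw [show (2:ℝ) = ((2:ℕ):ℝ) by norm_num, Real.rpow_natCast]
  set S₂ : ℝ := x⁻¹ ^ (2:ℝ) + M * ((1 - x⁻¹)/M) ^ (2:ℝ) with hS₂def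
  have hS₂eq : S₂ = x⁻¹ ^ 2 + M * ((1 - x⁻¹)/M) ^ 2 := by rw [hS₂def, hsq, hsq]
  have hS₂low : x⁻¹ ^ 2 ≤ S₂ := by
    rw [hS₂eq]
    have : (0:ℝ) ≤ (M:ℝ) * ((1 - x⁻¹)/M) ^ 2 := by positivity
    linarith
  have hterm2 : (M:ℝ) * ((1 - x⁻¹)/M) ^ 2 ≤ x⁻¹ ^ 2 := by
    have h1 : (M:ℝ) * ((1 - x⁻¹)/M) ^ 2 = (1 - x⁻¹) ^ 2 / M := by
      field_simp
    have h2 : (1 - x⁻¹) ^ 2 ≤ 1 := pow_le_one₀ h1t.le (by linarith)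
    have h3 : (1 - x⁻¹) ^ 2 / M ≤ 1 / (M:ℝ) := by gcongr
    have h4 : (1:ℝ) / M = x⁻¹ ^ k := by rw [hMr, one_div, ← inv_pow]
    have h5 : x⁻¹ ^ k ≤ x⁻¹ ^ 2 :=
      pow_le_pow_of_le_one (by positivity) (by linarith [ht1]) hk2
    rw [h1]; rw [h4] at h3; linarith
  have hS₂up : S₂ ≤ 2 * x⁻¹ ^ 2 := by rw [hS₂eq]; linarith
  have hx2pos : (0:ℝ) < x⁻¹ ^ 2 := by positivity
  have hS₂pos : (0:ℝ) < S₂ := lt_of_lt_of_le hx2pos hS₂low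
  have hlogx2 : Real.log (x⁻¹ ^ 2) = -(2 * X) := by
    rw [Real.log_pow, Real.log_inv, hXdef]; push_cast; ring
  have hlogS₂low : -(2 * X) ≤ Real.log S₂ := by
    rw [← hlogx2]; exact Real.log_le_log hx2pos hS₂low
  have hlogS₂up : Real.log S₂ ≤ Real.log 2 + -(2 * X) := by
    calc Real.log S₂ ≤ Real.log (2 * x⁻¹ ^ 2) := Real.log_le_log hS₂pos hS₂up
      _ = Real.log 2 + Real.log (x⁻¹ ^ 2) := Real.log_mul (by norm_num) (ne_of_gt hx2pos)
      _ = Real.log 2 + -(2 * X) := by rw [hlogx2]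
  have hv : renyi 2 (fun s : Fin (M+1) => if s = 0 then x⁻¹ else (1 - x⁻¹)/M)
      = -Real.log S₂ := by
    rw [renyi_eval hM0 _ ht ht1 (by norm_num : (2:ℝ) ≠ 1)]
    rw [hS₂def]; norm_num
  have hu' : (α - 1) * renyi α (fun s : Fin (M+1) => if s = 0 then x⁻¹ else (1 - x⁻¹)/M)
      = -Real.log S := by linear_combination -hu
  constructor
  · rw [hu']; linarith
  constructor
  · rw [hu']; linarith
  constructor
  · rw [hv]; linarith
  · rw [hv]; linarith

/-- Case α ≤ 1: a family with bounded R₂ but arbitrarily large R_α. -/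
lemma caseA (α : ℝ) (hα0 : 0 < α) (hα1 : α ≤ 1) (r : ℝ) :
    ∃ (L : ℕ) (p : Fin L → ℝ), 1 ≤ L ∧ (∀ s, 0 ≤ p s) ∧ (∑ s, p s = 1) ∧
      renyi 2 p ≤ Real.log 4 ∧ r < renyi α p := by
  set c' : ℝ := (1 - α)⁻¹ * Real.log 2 with hc'
  have hc'0 : 0 ≤ c' := by
    rcases eq_or_lt_of_le hα1 with h | h
    · simp [hc', ← h]
    · have : (0:ℝ) < 1 - α := by linarith
      have := Real.log_pos (show (1:ℝ) < 2 by norm_num)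
      positivity
  obtain ⟨M, hM2, hMlog⟩ := exists_nat_log_gt (max 0 (2 * (r + c')))
  have hM0 : 0 < M := by omega
  have hMr0 : (0:ℝ) < (M:ℝ) := by exact_mod_cast hM0
  have hmax0 : (0:ℝ) ≤ max 0 (2 * (r + c')) := le_max_left _ _
  have hmax1 : 2 * (r + c') ≤ max 0 (2 * (r + c')) := le_max_right _ _
  have hlogM0 : 0 < Real.log M := lt_of_le_of_lt hmax0 hMlog
  have hlogM1 : r + c' < Real.log M := by
    rcases le_or_gt (r + c') 0 with h | h
    · linarith
    · linarith
  have hlog2 : (0:ℝ) < Real.log 2 := Real.log_pos (by norm_num)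
  have ht : (0:ℝ) < 1/2 := by norm_num
  have ht1 : (1:ℝ)/2 < 1 := by norm_num
  refine ⟨M + 1, fun s : Fin (M+1) => if s = 0 then 1/2 else (1 - 1/2)/M,
    Nat.succ_le_succ (Nat.zero_le M), ?_, pdist_sum hM0 _, ?_, ?_⟩
  · intro s; dsimp only; split
    · norm_num
    · positivity
  · -- R₂ ≤ log 4
    have hsq : ∀ y : ℝ, y ^ (2:ℝ) = y ^ 2 := fun y => by
      rw [show (2:ℝ) = ((2:ℕ):ℝ) by norm_num, Real.rpow_natCast]
    rw [renyi_eval hM0 _ ht ht1 (by norm_num : (2:ℝ) ≠ 1), hsq, hsq]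
    have he : ((1:ℝ)/2) ^ 2 + (M:ℝ) * (((1:ℝ) - 1/2)/M) ^ 2 = 1/4 + 1/(4*M) := by
      field_simp; ring
    rw [he]
    have hpos : (0:ℝ) < 1/(4*(M:ℝ)) := by positivity
    have hge : (1/4 : ℝ) ≤ 1/4 + 1/(4*(M:ℝ)) := by linarith
    have hloggle : Real.log (1/4 : ℝ) ≤ Real.log (1/4 + 1/(4*(M:ℝ))) :=
      Real.log_le_log (by norm_num) hge
    have h14 : Real.log (1/4 : ℝ) = -Real.log 4 := by
      rw [show (1/4:ℝ) = 4⁻¹ by norm_num, Real.log_inv]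
    have : ((1:ℝ) - 2)⁻¹ = -1 := by norm_num
    rw [this]
    linarith
  · -- r < R_α
    rcases eq_or_lt_of_le hα1 with heq | hlt
    · -- α = 1
      subst heq
      rw [shannon_eval hM0 _ ht ht1]
      have hhalf : ((1:ℝ) - 1/2)/M = (2*(M:ℝ))⁻¹ := by
        rw [show (1:ℝ) - 1/2 = 1/2 by norm_num]
        field_simp
      have hlh : Real.log ((2*(M:ℝ))⁻¹) = -(Real.log 2 + Real.log M) := by
        rw [Real.log_inv, Real.log_mul (by norm_num) (ne_of_gt hMr0)]
      have hl2 : Real.log ((1:ℝ)/2) = -Real.log 2 := by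
        rw [show (1/2:ℝ) = 2⁻¹ by norm_num, Real.log_inv]
      rw [hhalf, hlh, hl2]
      have hc'eq : c' = 0 := by rw [hc']; norm_num
      rw [hc'eq, add_zero] at hlogM1
      nlinarith [hlogM0, hlog2, hlogM1]
    · -- α < 1
      have h1α : (0:ℝ) < 1 - α := by linarith
      rw [renyi_eval hM0 _ ht ht1 (by linarith : α ≠ 1)]
      have hhalf : ((1:ℝ) - 1/2)/M = (2*(M:ℝ))⁻¹ := by
        rw [show (1:ℝ) - 1/2 = 1/2 by norm_num]
        field_simp
      have hy0 : (0:ℝ) < 2*(M:ℝ) := by positivity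
      have hterm : (M:ℝ) * ((2*(M:ℝ))⁻¹) ^ α = (1/2) * (2*(M:ℝ)) ^ ((1:ℝ) - α) := by
        rw [Real.inv_rpow hy0.le, show (1:ℝ) - α = 1 + (-α) by ring,
          Real.rpow_add hy0, Real.rpow_one, Real.rpow_neg hy0.le]
        ring
      rw [hhalf, hterm]
      set S : ℝ := ((1:ℝ)/2) ^ α + 1/2 * (2*(M:ℝ)) ^ ((1:ℝ) - α) with hSdef
      have hS1 : (0:ℝ) ≤ ((1:ℝ)/2) ^ α := Real.rpow_nonneg (by norm_num) α
      have hS2pos : (0:ℝ) < 1/2 * (2*(M:ℝ)) ^ ((1:ℝ) - α) := by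
        have := Real.rpow_pos_of_pos hy0 ((1:ℝ) - α); linarith
      have hSpos : (0:ℝ) < S := by rw [hSdef]; linarith
      have hSlow : 1/2 * (2*(M:ℝ)) ^ ((1:ℝ) - α) ≤ S := by rw [hSdef]; linarith
      have hlogSlow : -Real.log 2 + (1 - α) * (Real.log 2 + Real.log M) ≤ Real.log S := by
        have h1 : Real.log (1/2 * (2*(M:ℝ)) ^ ((1:ℝ) - α))
            = Real.log (1/2 : ℝ) + (1 - α) * Real.log (2*(M:ℝ)) := by
          rw [Real.log_mul (by norm_num) (ne_of_gt (Real.rpow_pos_of_pos hy0 _)),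
            Real.log_rpow hy0]
        have h2 : Real.log ((1:ℝ)/2) = -Real.log 2 := by
          rw [show (1/2:ℝ) = 2⁻¹ by norm_num, Real.log_inv]
        have h3 : Real.log (2*(M:ℝ)) = Real.log 2 + Real.log M :=
          Real.log_mul (by norm_num) (ne_of_gt hMr0)
        have h4 := Real.log_le_log hS2pos hSlow
        rw [h1, h2, h3] at h4
        linarith
      have hstep : (1 - α) * Real.log M - Real.log 2 ≤ Real.log S := by
        have : (0:ℝ) ≤ (1 - α) * Real.log 2 := by positivity
        linarith
      have hmul := mul_le_mul_of_nonneg_left hstep (inv_nonneg.mpr h1α.le)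
      have heq2 : (1 - α)⁻¹ * ((1 - α) * Real.log M - Real.log 2)
          = Real.log M - c' := by
        rw [hc']; field_simp
      rw [heq2] at hmul
      linarith

/-- Only the second Rényi entropy can tightly bound a quantity that is
`Θ(e^{-R₂})`: for `α ≠ 2` there is a distribution violating one of the two-sided bounds,
and consequently no such doubly-bounded quantity `ε` exists. -/
theorem renyi_two_is_the_unique_tight_exponent
    (α : ℝ) (hα0 : 0 < α) (hα2 : α ≠ 2)
    (a b : ℝ) (ha0 : 0 < a) (ha1 : a ≤ 1) (hb : 1 ≤ b)
    (C₁ C₂ C₁' C₂' : ℝ) (hC₁ : 0 < C₁) (hC₂ : 0 < C₂) (hC₁' : 0 < C₁') (hC₂' : 0 < C₂') :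
    (∃ (L : ℕ) (p : Fin L → ℝ), 1 ≤ L ∧ (∀ s, 0 ≤ p s) ∧ (∑ s, p s = 1) ∧
        (C₂' * Real.exp (-(b * renyi α p)) < C₁ * Real.exp (-(renyi 2 p)) ∨
          C₂ * Real.exp (-(renyi 2 p)) < C₁' * Real.exp (-(a * renyi α p)))) ∧
      ¬∃ ε : (L : ℕ) → (Fin L → ℝ) → ℝ,
          ∀ (L : ℕ) (p : Fin L → ℝ), (∀ s, 0 ≤ p s) → (∑ s, p s = 1) →
            (C₁ * Real.exp (-(renyi 2 p)) ≤ ε L p ∧ ε L p ≤ C₂ * Real.exp (-(renyi 2 p)) ∧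
              C₁' * Real.exp (-(a * renyi α p)) ≤ ε L p ∧
              ε L p ≤ C₂' * Real.exp (-(b * renyi α p))) := by
  have hlog2 : (0:ℝ) < Real.log 2 := Real.log_pos (by norm_num)
  have main : ∃ (L : ℕ) (p : Fin L → ℝ), 1 ≤ L ∧ (∀ s, 0 ≤ p s) ∧ (∑ s, p s = 1) ∧
      (C₂' * Real.exp (-(b * renyi α p)) < C₁ * Real.exp (-(renyi 2 p)) ∨
        C₂ * Real.exp (-(renyi 2 p)) < C₁' * Real.exp (-(a * renyi α p))) := by
    rcases le_or_gt α 1 with hA | hB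
    · set c := max 0 (Real.log C₂' - Real.log C₁) with hc
      have hc0 : (0:ℝ) ≤ c := le_max_left _ _
      have hc1 : Real.log C₂' - Real.log C₁ ≤ c := le_max_right _ _
      obtain ⟨L, p, hL, h0, h1, hv4, hur⟩ := caseA α hα0 hA (Real.log 4 + c)
      refine ⟨L, p, hL, h0, h1, Or.inl ?_⟩
      apply exp_ineq _ _ _ _ hC₂' hC₁
      have hl4 : (0:ℝ) < Real.log 4 := Real.log_pos (by norm_num)
      have hu0 : 0 ≤ renyi α p := by linarith
      have hbu : renyi α p ≤ b * renyi α p := le_mul_of_one_le_left hu0 hb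
      linarith
    · have hα1' : (0:ℝ) < α - 1 := by linarith
      rcases lt_or_gt_of_ne hα2 with h2 | h2
      · -- 1 < α < 2
        set c := max 0 (Real.log C₂' - Real.log C₁) with hc
        have hc0 : (0:ℝ) ≤ c := le_max_left _ _
        have hc1 : Real.log C₂' - Real.log C₁ ≤ c := le_max_right _ _
        have h2α : (0:ℝ) < 2 - α := by linarith
        obtain ⟨L, p, hL, h0, h1, X, hXr, hX2, huu, hul, hvl, hvu⟩ :=
          caseB α hB (max (Real.log 2) (((α-1)*c + Real.log 2)/(2-α))) (le_max_left _ _)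
        refine ⟨L, p, hL, h0, h1, Or.inl ?_⟩
        apply exp_ineq _ _ _ _ hC₂' hC₁
        have hX' : ((α-1)*c + Real.log 2)/(2-α) < X := lt_of_le_of_lt (le_max_right _ _) hXr
        have hXX : (α-1)*c + Real.log 2 < (2-α)*X := by
          rw [div_lt_iff₀ h2α] at hX'; linarith
        have hval : 0 < (α-1) * renyi α p := by
          nlinarith [mul_pos hα0 (sub_pos.mpr hX2), mul_nonneg hα1'.le hlog2.le]
        have hu0 : 0 ≤ renyi α p := by
          rcases mul_pos_iff.mp hval with ⟨_, h⟩ | ⟨h, _⟩ <;> linarith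
        have hbu : renyi α p ≤ b * renyi α p := le_mul_of_one_le_left hu0 hb
        have hkey : (α-1)*c < (α-1)*(renyi α p - renyi 2 p) := by
          have hv2 := mul_le_mul_of_nonneg_left hvu hα1'.le
          nlinarith [hul, hv2, hXX]
        have hkey' : c < renyi α p - renyi 2 p := (mul_lt_mul_iff_right₀ hα1').mp hkey
        linarith
      · -- α > 2
        set c := max 0 (Real.log C₂ - Real.log C₁') with hc
        have hc0 : (0:ℝ) ≤ c := le_max_left _ _
        have hc1 : Real.log C₂ - Real.log C₁' ≤ c := le_max_right _ _
        have h2α : (0:ℝ) < α - 2 := by linarith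
        obtain ⟨L, p, hL, h0, h1, X, hXr, hX2, huu, hul, hvl, hvu⟩ :=
          caseB α hB (max (Real.log 2) (((α-1)*c + (α-1)*Real.log 2)/(α-2))) (le_max_left _ _)
        refine ⟨L, p, hL, h0, h1, Or.inr ?_⟩
        apply exp_ineq _ _ _ _ hC₂ hC₁'
        have hX' : ((α-1)*c + (α-1)*Real.log 2)/(α-2) < X := lt_of_le_of_lt (le_max_right _ _) hXr
        have hXX : (α-1)*c + (α-1)*Real.log 2 < (α-2)*X := by
          rw [div_lt_iff₀ h2α] at hX'; linarith
        have hval : 0 < (α-1) * renyi α p := by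
          nlinarith [mul_pos hα0 (sub_pos.mpr hX2), mul_nonneg hα1'.le hlog2.le]
        have hu0 : 0 ≤ renyi α p := by
          rcases mul_pos_iff.mp hval with ⟨_, h⟩ | ⟨h, _⟩ <;> linarith
        have hau : a * renyi α p ≤ renyi α p := mul_le_of_le_one_left hu0 ha1
        have hkey : (α-1)*c < (α-1)*(renyi 2 p - renyi α p) := by
          have hv2 := mul_le_mul_of_nonneg_left hvl hα1'.le
          nlinarith [huu, hv2, hXX]
        have hkey' : c < renyi 2 p - renyi α p := (mul_lt_mul_iff_right₀ hα1').mp hkey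
        linarith
  refine ⟨main, ?_⟩
  rintro ⟨ε, hε⟩
  obtain ⟨L, p, hL, h0, h1, hdisj⟩ := main
  obtain ⟨e1, e2, e3, e4⟩ := hε L p h0 h1
  rcases hdisj with h | h <;> linarith

end
end
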